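/- Let (s_{k,j})_{k,j≥0} be the moments of a strictly positive definite scalar kernel on ℕ, R_n(t) = [s_{k,j}]_{t≤k,j≤t+n}, F_n(t) the (n+1)×(n+1) lower shift matrix (ones on the subdiagonal), J = diag(1,−1), and G_n(t) = s_{t,t}^{−1/2} · [[s_{t,t}, 0], [conj(s_{t,t+1}), conj(s_{t,t+1})], ..., [conj(s_{t,t+n}), conj(s_{t,t+n})]]. Then the displacement equation R_n(t) − F_n(t) R_n(t+1) F_n(t)* = G_n(t) J G_n(t)* holds for all t ≥ 0. -/

import Mathlib

open Matrix

open scoped ComplexConjugate ComplexOrder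

/-- Let `(s k j)` be the moments of a strictly positive definite Hermitian scalar kernel
on `ℕ`, `R_n(t) = [s_{k,j}]_{t ≤ k,j ≤ t+n}`, `F_n(t)` the lower shift matrix,
`J = diag(1,-1)` and `G_n(t) = s_{t,t}^{-1/2}·[[s_{t,t},0],[conj s_{t,t+1}, conj s_{t,t+1}],
…, [conj s_{t,t+n}, conj s_{t,t+n}]]`.  Then
`R_n(t) - F_n(t) R_n(t+1) F_n(t)* = G_n(t) J G_n(t)*` for all `t`. -/
theorem stmt14 (s : ℕ → ℕ → ℂ) (n : ℕ)
    (hherm : ∀ k j, s j k = conj (s k j))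
    (hpd : ∀ (t m : ℕ),
      (Matrix.of fun i j : Fin (m + 1) => s (t + i) (t + j)).PosDef)
    (R : ℕ → Matrix (Fin (n + 1)) (Fin (n + 1)) ℂ)
    (hR : R = fun t => Matrix.of fun (i j : Fin (n + 1)) => s (t + i) (t + j))
    (F : Matrix (Fin (n + 1)) (Fin (n + 1)) ℂ)
    (hF : F = Matrix.of fun (i j : Fin (n + 1)) => if (i : ℕ) = (j : ℕ) + 1 then 1 else 0)
    (J : Matrix (Fin 2) (Fin 2) ℂ) (hJ : J = !![1, 0; 0, -1])
    (G : ℕ → Matrix (Fin (n + 1)) (Fin 2) ℂ)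
    (hG : G = fun t => Matrix.of fun (i : Fin (n + 1)) (j : Fin 2) =>
      ((Real.sqrt (s t t).re : ℝ) : ℂ)⁻¹ *
        (if (i : ℕ) = 0 then (if (j : ℕ) = 0 then s t t else 0)
         else conj (s t (t + i)))) :
    ∀ t : ℕ, R t - F * R (t + 1) * Fᴴ = G t * J * (G t)ᴴ := by
  intro t
  have hpos : 0 < s t t := by
    have h := (hpd t 0).2 (x := Finsupp.single 0 1) (by
      intro h
      exact one_ne_zero (Finsupp.single_eq_zero.mp h))
    simpa [Finsupp.sum_single_index] using h
  obtain ⟨hre, him⟩ := Complex.lt_def.mp hpos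
  simp only [Complex.zero_re, Complex.zero_im] at hre him
  set a : ℝ := (s t t).re with ha
  have hstt : s t t = (a : ℂ) := Complex.ext rfl (by simp [← him])
  set r : ℂ := ((Real.sqrt a : ℝ) : ℂ) with hrdef
  have hrr : r * r = (a : ℂ) := by
    rw [hrdef, ← Complex.ofReal_mul, Real.mul_self_sqrt hre.le]
  have hane : (a : ℂ) ≠ 0 := by exact_mod_cast ne_of_gt hre
  have hrne : r ≠ 0 := by
    intro h; rw [h, mul_zero] at hrr; exact hane hrr.symm
  have hrc : conj r = r := by rw [hrdef, Complex.conj_ofReal]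
  ext i j
  have hLHS : (R t - F * R (t + 1) * Fᴴ) i j =
      if (i : ℕ) = 0 ∨ (j : ℕ) = 0 then s (t + i) (t + j) else 0 := by
    subst hR hF
    simp only [Matrix.sub_apply, Matrix.mul_apply, Matrix.conjTranspose_apply,
      Matrix.of_apply, mul_ite, ite_mul, one_mul, mul_one, zero_mul, mul_zero,
      apply_ite (star : ℂ → ℂ), star_one, star_zero, Finset.sum_ite_irrel,
      Finset.sum_const_zero]
    rcases Nat.eq_zero_or_pos (i : ℕ) with hi | hi
    · simp [hi, Nat.succ_ne_zero]
    · rcases Nat.eq_zero_or_pos (j : ℕ) with hj | hj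
      · simp [hj, Nat.succ_ne_zero, (by omega : ∀ k : ℕ, ¬ (0 = k + 1))]
      · obtain ⟨i', hi'⟩ : ∃ i' : Fin (n+1), (i:ℕ) = (i':ℕ) + 1 :=
          ⟨⟨(i:ℕ) - 1, by omega⟩, by simp; omega⟩
        obtain ⟨j', hj'⟩ : ∃ j' : Fin (n+1), (j:ℕ) = (j':ℕ) + 1 :=
          ⟨⟨(j:ℕ) - 1, by omega⟩, by simp; omega⟩
        have h1 : ∀ k : Fin (n+1), ((i:ℕ) = (k:ℕ) + 1) = (k = i') := by
          intro k; simp [hi', Fin.ext_iff]; omega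
        have h2 : ∀ l : Fin (n+1), ((j:ℕ) = (l:ℕ) + 1) = (l = j') := by
          intro l; simp [hj', Fin.ext_iff]; omega
        simp only [h1, h2, Finset.sum_ite_eq', Finset.mem_univ, if_true,
          mul_ite, mul_zero, mul_one]
        rw [if_neg (by omega : ¬ ((i:ℕ) = 0 ∨ (j:ℕ) = 0)),
          show t + 1 + (i':ℕ) = t + (i:ℕ) by omega,
          show t + 1 + (j':ℕ) = t + (j:ℕ) by omega, sub_self]
  rw [hLHS]
  subst hG hJ
  simp only [Matrix.mul_apply, Matrix.conjTranspose_apply, Matrix.of_apply,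
    Fin.sum_univ_two, Matrix.cons_val', Matrix.cons_val_zero, Matrix.cons_val_one,
    Matrix.head_cons, Matrix.head_fin_const, Matrix.empty_val',
    Matrix.cons_val_fin_one, Fin.isValue, Fin.val_zero, Fin.val_one]
  rcases Nat.eq_zero_or_pos (i : ℕ) with hi | hi
  · rcases Nat.eq_zero_or_pos (j : ℕ) with hj | hj
    · simp only [hi, hj, if_true, if_pos, Nat.add_zero,
        if_neg (one_ne_zero : ¬ (1:ℕ) = 0), mul_zero, zero_mul, add_zero,
        mul_one, mul_neg, neg_zero, star_zero, true_or]
      rw [hstt, Complex.ofReal_re, ← hrdef]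
      simp only [Complex.star_def, _root_.map_mul, map_inv₀, hrc, Complex.conj_ofReal]
      field_simp
      rw [sq]; exact hrr
    · simp only [hi, if_true, if_neg (by omega : ¬ (j:ℕ) = 0), Nat.add_zero,
        if_neg (one_ne_zero : ¬ (1:ℕ) = 0), mul_zero, zero_mul, add_zero,
        mul_one, mul_neg, neg_zero, star_zero, true_or]
      rw [hstt, Complex.ofReal_re, ← hrdef]
      simp only [Complex.star_def, _root_.map_mul, map_inv₀, hrc, Complex.conj_ofReal,
        Complex.conj_conj]
      field_simp
      linear_combination s t (t + (j:ℕ)) * hrr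
  · rcases Nat.eq_zero_or_pos (j : ℕ) with hj | hj
    · simp only [hj, if_true, if_neg (by omega : ¬ (i:ℕ) = 0), Nat.add_zero,
        if_neg (one_ne_zero : ¬ (1:ℕ) = 0), mul_zero, zero_mul, add_zero,
        mul_one, mul_neg, neg_zero, star_zero, or_true]
      rw [hherm t (t + (i:ℕ)), hstt, Complex.ofReal_re, ← hrdef]
      simp only [Complex.star_def, _root_.map_mul, map_inv₀, hrc, Complex.conj_ofReal,
        Complex.conj_conj]
      field_simp
      rw [sq, hrr]
    · simp only [if_neg (by omega : ¬ (i:ℕ) = 0), if_neg (by omega : ¬ (j:ℕ) = 0),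
        if_neg (by push_neg; omega : ¬ ((i:ℕ) = 0 ∨ (j:ℕ) = 0))]
      ring
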